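/- Let D be a digraph on n ≥ 3 vertices with minimum out-degree δ^+(D) ≥ n/2 and minimum in-degree δ^-(D) ≥ n/2. Then D contains a Hamiltonian oriented cycle. -/

import Mathlib

open Finset

/-- Out-degree of a vertex in the digraph with arc relation `A`. -/
def outDeg {V : Type*} [Fintype V] (A : V → V → Prop) [DecidableRel A] (v : V) : ℕ :=
  (Finset.univ.filter (fun w => A v w)).card

/-- In-degree of a vertex. -/
def inDeg {V : Type*} [Fintype V] (A : V → V → Prop) [DecidableRel A] (v : V) : ℕ :=
  (Finset.univ.filter (fun w => A w v)).card

/-- Number of out-neighbours of `v` lying in the set `S`. -/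
def outDegOn {V : Type*} (A : V → V → Prop) [DecidableRel A] (S : Finset V) (v : V) : ℕ :=
  (S.filter (fun w => A v w)).card

/-- Number of in-neighbours of `v` lying in the set `S`. -/
def inDegOn {V : Type*} (A : V → V → Prop) [DecidableRel A] (S : Finset V) (v : V) : ℕ :=
  (S.filter (fun w => A w v)).card

/-- `D = (V, A)` is bipartite with colour classes `X`, `Y`. -/
def IsBipartite {V : Type*} (A : V → V → Prop) (X Y : Finset V) : Prop :=
  Disjoint X Y ∧ (∀ v : V, v ∈ X ∨ v ∈ Y) ∧
    ∀ u v : V, A u v → (u ∈ X ∧ v ∈ Y) ∨ (u ∈ Y ∧ v ∈ X)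

/-- An oriented path on `s` vertices `p 0, p 1, …, p (s-1)`. -/
def IsPath {V : Type*} (A : V → V → Prop) (s : ℕ) (p : ℕ → V) : Prop :=
  Set.InjOn p (Set.Iio s) ∧ ∀ i : ℕ, i + 1 < s → A (p i) (p (i + 1))

/-- An oriented cycle on `s` distinct vertices `p 0, …, p (s-1)` (indices mod `s`). -/
def IsCycle {V : Type*} (A : V → V → Prop) (s : ℕ) (p : ℕ → V) : Prop :=
  Set.InjOn p (Set.Iio s) ∧ ∀ i : ℕ, i < s → A (p i) (p ((i + 1) % s))

/-- `M` is a matching from `X` to `Y`: an independent set of arcs with origin in `X`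
and terminus in `Y`. -/
def IsMatching {V : Type*} (A : V → V → Prop) (X Y : Finset V) (M : Finset (V × V)) : Prop :=
  (∀ e ∈ M, e.1 ∈ X ∧ e.2 ∈ Y ∧ A e.1 e.2) ∧
    ∀ e ∈ M, ∀ e' ∈ M, e ≠ e' → e.1 ≠ e'.1 ∧ e.2 ≠ e'.2

/-- A complete matching from `X` to `Y`: a matching consisting of `|X|` arcs. -/
def IsCompleteMatching {V : Type*} (A : V → V → Prop) (X Y : Finset V)
    (M : Finset (V × V)) : Prop :=
  IsMatching A X Y M ∧ M.card = X.card

/-- The path `p 0, …, p (s-1)` is compatible with the matching `M`: its arcs lie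
alternately in `M` and outside `M`. -/
def PathCompat {V : Type*} (M : Finset (V × V)) (s : ℕ) (p : ℕ → V) : Prop :=
  ∀ i : ℕ, i + 2 < s → ((p i, p (i + 1)) ∈ M ↔ (p (i + 1), p (i + 2)) ∉ M)

/-- The cycle `p 0, …, p (s-1)` is compatible with the matching `M`. -/
def CycleCompat {V : Type*} (M : Finset (V × V)) (s : ℕ) (p : ℕ → V) : Prop :=
  ∀ i : ℕ, i < s →
    ((p i, p ((i + 1) % s)) ∈ M ↔ (p ((i + 1) % s), p ((i + 2) % s)) ∉ M)

/-- The path `p 0, …, p (s-1)` avoids the vertex set `S`. -/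
def Avoids {V : Type*} (s : ℕ) (p : ℕ → V) (S : Finset V) : Prop :=
  ∀ i : ℕ, i < s → p i ∉ S

namespace GH

variable {V : Type*} [Fintype V] [DecidableEq V]

lemma cyc_le {t : ℕ} (f : ZMod t → V) (h1 : Function.Injective f) : t ≤ Fintype.card V := by
  rcases Nat.eq_zero_or_pos t with rfl | ht
  · exact Nat.zero_le _
  · haveI : NeZero t := ⟨by omega⟩
    calc t = Fintype.card (ZMod t) := (ZMod.card t).symm
    _ ≤ Fintype.card V := Fintype.card_le_of_injective f h1

variable (A : V → V → Prop) [DecidableRel A]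

lemma chain'_map_range {α : Type*} {R : α → α → Prop} (g : ℕ → α) (N : ℕ)
    (h : ∀ m, m + 1 < N → R (g m) (g (m + 1))) :
    List.IsChain R ((List.range N).map g) := by
  rw [List.isChain_iff_getElem]
  intro i hi
  simp only [List.length_map, List.length_range] at hi
  simp only [List.getElem_map, List.getElem_range]
  exact h i (by omega)

lemma listToFn (c : List V) (hne : c ≠ []) (hnd : c.Nodup) (hch : List.IsChain A c)
    (hw : A (c.getLast hne) (c.head hne)) :
    ∃ f : ZMod c.length → V, Function.Injective f ∧ ∀ i, A (f i) (f (i + 1)) := by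
  have ht : 0 < c.length := List.length_pos_iff.2 hne
  haveI : NeZero c.length := ⟨by omega⟩
  refine ⟨fun i => c.get ⟨i.val, i.val_lt⟩, ?_, ?_⟩
  · intro i j hij
    have h2 := List.nodup_iff_injective_get.1 hnd hij
    exact ZMod.val_injective _ (congrArg Fin.val h2)
  · intro i
    have hv : i.val < c.length := i.val_lt
    have h1 : (i + 1).val = (i.val + 1) % c.length := by
      rw [ZMod.val_add, ZMod.val_one_eq_one_mod]
      conv_rhs => rw [Nat.add_mod]
      rw [Nat.mod_eq_of_lt hv]
    by_cases hc : i.val + 1 < c.length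
    · have h2 : (i + 1).val = i.val + 1 := by rw [h1, Nat.mod_eq_of_lt hc]
      have h3 := List.isChain_iff_getElem.1 hch i.val (by omega)
      simp only [List.get_eq_getElem] at h3 ⊢
      simp only [h2]
      exact h3
    · have hiv : i.val = c.length - 1 := by omega
      have h2 : (i + 1).val = 0 := by
        rw [h1, hiv]
        have h4 : c.length - 1 + 1 = c.length := by omega
        rw [h4, Nat.mod_self]
      simp only [List.get_eq_getElem, h2, hiv]
      rw [← List.head_eq_getElem hne]
      have h5 := List.getLast_eq_getElem hne
      rw [← h5]
      exact hw

lemma exists_longest_path (S : Finset V) (hS : S.Nonempty) :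
    ∃ q : List V, q ≠ [] ∧ q.Nodup ∧ List.IsChain A q ∧ (∀ v ∈ q, v ∈ S) ∧
      ∀ r : List V, r ≠ [] → r.Nodup → List.IsChain A r → (∀ v ∈ r, v ∈ S) →
        r.length ≤ q.length := by
  set T : Set ℕ :=
    {k | ∃ l : List V, l ≠ [] ∧ l.Nodup ∧ List.IsChain A l ∧ (∀ v ∈ l, v ∈ S) ∧ l.length = k}
    with hT
  obtain ⟨v, hv⟩ := hS
  have hne : T.Nonempty := ⟨1, [v], by simp, by simp, by simp, by simpa using hv, rfl⟩
  have hbdd : BddAbove T :=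
    ⟨Fintype.card V, by rintro k ⟨l, -, hnd, -, -, rfl⟩; exact hnd.length_le_card⟩
  obtain ⟨q, hq1, hq2, hq3, hq4, hq5⟩ := Nat.sSup_mem hne hbdd
  exact ⟨q, hq1, hq2, hq3, hq4,
    fun r h1 h2 h3 h4 => hq5 ▸ le_csSup hbdd ⟨r, h1, h2, h3, h4, rfl⟩⟩

end GH

set_option linter.unusedSectionVars false
set_option maxHeartbeats 1000000 in
theorem stmt_9 {V : Type*} [Fintype V] [DecidableEq V]
    (A : V → V → Prop) [DecidableRel A] (hirr : ∀ v : V, ¬ A v v)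
    (hn : 3 ≤ Fintype.card V)
    (hdeg : ∀ v : V, Fintype.card V ≤ 2 * outDeg A v ∧
      Fintype.card V ≤ 2 * inDeg A v) :
    ∃ p : ℕ → V, IsCycle A (Fintype.card V) p ∧
      ∀ v : V, ∃ i < Fintype.card V, p i = v := by
  set n := Fintype.card V with hnV
  haveI hVne : Nonempty V := Fintype.card_pos_iff.1 (by omega)
  -- Step A : some cycle exists
  have hcyc : ∃ t : ℕ, ∃ g : ZMod t → V, Function.Injective g ∧ ∀ i, A (g i) (g (i + 1)) := by
    obtain ⟨p, hpne, hpnd, hpch, -, hpmax⟩ :=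
      GH.exists_longest_path A Finset.univ Finset.univ_nonempty
    have hzdeg := (hdeg (p.getLast hpne)).1
    have hodef : outDeg A (p.getLast hpne)
        = (Finset.univ.filter (fun w => A (p.getLast hpne) w)).card := rfl
    have hfil : (Finset.univ.filter (fun w => A (p.getLast hpne) w)).Nonempty := by
      rw [← Finset.card_pos]
      omega
    obtain ⟨y, hy⟩ := hfil
    have hAzy : A (p.getLast hpne) y := (Finset.mem_filter.1 hy).2
    have hymem : y ∈ p := by
      by_contra hyp
      have hr := hpmax (p ++ [y]) (by simp)
        (by rw [List.nodup_append]
            exact ⟨hpnd, List.nodup_singleton y,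
              fun a ha b hb hab => by simp at hb; subst hb; subst hab; exact hyp ha⟩)
        (by rw [List.isChain_append]
            refine ⟨hpch, List.isChain_singleton y, ?_⟩
            intro x hx y' hy'
            rw [List.getLast?_eq_getLast hpne] at hx
            simp at hx hy'
            subst hx; subst hy'; exact hAzy)
        (fun v _ => Finset.mem_univ v)
      have : p.length + 1 ≤ p.length := by simpa using hr
      omega
    obtain ⟨l1, l2, hp⟩ := List.append_of_mem hymem
    subst hp
    have hcne : (y :: l2) ≠ [] := by simp
    have hcnd : (y :: l2).Nodup := List.Nodup.of_append_right hpnd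
    have hcch := List.IsChain.right_of_append hpch
    have hlh : A ((y :: l2).getLast hcne) ((y :: l2).head hcne) := by
      have h9 : (l1 ++ y :: l2).getLast hpne = (y :: l2).getLast hcne := by
        rw [List.getLast_append]; simp
      have h10 : (y :: l2).head hcne = y := rfl
      rw [h10, ← h9]; exact hAzy
    obtain ⟨g, hg1, hg2⟩ := GH.listToFn A (y :: l2) hcne hcnd hcch hlh
    exact ⟨_, g, hg1, hg2⟩
  -- Step B : a longest cycle
  obtain ⟨t0, f, hfinj, hfarc, hmaxT⟩ :
      ∃ t0 : ℕ, ∃ f : ZMod t0 → V, Function.Injective f ∧ (∀ i, A (f i) (f (i + 1))) ∧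
        ∀ (t : ℕ) (g : ZMod t → V), Function.Injective g →
          (∀ i, A (g i) (g (i + 1))) → t ≤ t0 := by
    set T : Set ℕ :=
      {t | ∃ f : ZMod t → V, Function.Injective f ∧ ∀ i, A (f i) (f (i + 1))} with hT
    have hTne : T.Nonempty := by obtain ⟨t, g, h1, h2⟩ := hcyc; exact ⟨t, g, h1, h2⟩
    have hTbdd : BddAbove T := ⟨n, by
      rintro t ⟨g, h1, -⟩
      have := GH.cyc_le g h1
      omega⟩
    obtain ⟨f, h1, h2⟩ := Nat.sSup_mem hTne hTbdd
    exact ⟨sSup T, f, h1, h2, fun t g hg1 hg2 => le_csSup hTbdd ⟨g, hg1, hg2⟩⟩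
  have ht00 : t0 ≠ 0 := by
    rintro rfl
    haveI := Finite.of_injective f hfinj
    haveI : Infinite (ZMod 0) := (inferInstance : Infinite ℤ)
    exact not_finite (ZMod 0)
  have ht01 : t0 ≠ 1 := by
    rintro rfl
    have h := hfarc 0
    have h2 : ((0 : ZMod 1) + 1) = 0 := by decide
    rw [h2] at h
    exact hirr _ h
  haveI : NeZero t0 := ⟨ht00⟩
  have ht0n : t0 ≤ n := by have := GH.cyc_le f hfinj; omega
  by_cases hEq : t0 = n
  · -- Hamiltonian: done
    rw [← hEq]
    refine ⟨fun i => f ((i : ℕ) : ZMod t0), ⟨?_, ?_⟩, ?_⟩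
    · intro i hi j hj hij
      simp only [Set.mem_Iio] at hi hj
      have h2 : ((i : ZMod t0)) = ((j : ZMod t0)) := hfinj hij
      have hv := congrArg ZMod.val h2
      rwa [ZMod.val_cast_of_lt hi, ZMod.val_cast_of_lt hj] at hv
    · intro i hi
      have h2 : (((i + 1) % t0 : ℕ) : ZMod t0) = ((i : ZMod t0) + 1) := by
        rw [ZMod.natCast_mod]
        push_cast
        ring
      show A (f ((i : ℕ) : ZMod t0)) (f ((((i + 1) % t0 : ℕ)) : ZMod t0))
      rw [h2]
      exact hfarc _
    · intro v
      have hbij : Function.Bijective f :=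
        (Fintype.bijective_iff_injective_and_card f).2 ⟨hfinj, by rw [ZMod.card, hEq]⟩
      obtain ⟨i, rfl⟩ := hbij.2 v
      exact ⟨i.val, i.val_lt, congrArg f (ZMod.natCast_rightInverse i)⟩
  · -- t0 < n
    have ht0lt : t0 < n := lt_of_le_of_ne ht0n hEq
    exfalso
    set C : Finset V := Finset.image f Finset.univ with hC
    have hCcard : C.card = t0 := by
      rw [hC, Finset.card_image_of_injective _ hfinj, Finset.card_univ, ZMod.card]
    have hSne : (Finset.univ \ C).Nonempty := by
      rw [← Finset.card_pos, Finset.card_sdiff_of_subset (Finset.subset_univ C), Finset.card_univ,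
        hCcard, ← hnV]
      omega
    obtain ⟨q, hqne, hqnd, hqch, hqS, hqmax⟩ := GH.exists_longest_path A _ hSne
    set s := q.length with hs
    have hs1 : 1 ≤ s := List.length_pos_iff.2 hqne
    set u1 := q.head hqne with hu1
    set us := q.getLast hqne with hus
    have hqC : ∀ v ∈ q, v ∉ C := fun v hv => (Finset.mem_sdiff.1 (hqS v hv)).2
    have hstn : s + t0 ≤ n := by
      have h1 : q.toFinset ⊆ Finset.univ \ C := fun v hv => hqS v (List.mem_toFinset.1 hv)
      have h2 := Finset.card_le_card h1
      rw [List.toFinset_card_of_nodup hqnd, Finset.card_sdiff_of_subset (Finset.subset_univ C),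
        Finset.card_univ, hCcard, ← hnV] at h2
      omega
    have hin : ∀ w, A w u1 → w ∈ C ∨ w ∈ q := by
      intro w hw
      by_contra hcon
      push_neg at hcon
      obtain ⟨hw1, hw2⟩ := hcon
      have hr := hqmax (w :: q) (by simp)
        (List.nodup_cons.2 ⟨hw2, hqnd⟩)
        (by rw [List.isChain_cons]
            refine ⟨?_, hqch⟩
            intro y hy
            rw [List.head?_eq_head hqne] at hy
            simp at hy
            subst hy
            exact hw)
        (by intro v hv
            rcases List.mem_cons.1 hv with rfl | hv2
            · exact Finset.mem_sdiff.2 ⟨Finset.mem_univ _, hw1⟩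
            · exact hqS v hv2)
      have : q.length + 1 ≤ q.length := by simp at hr; omega
      omega
    have hout : ∀ w, A us w → w ∈ C ∨ w ∈ q := by
      intro w hw
      by_contra hcon
      push_neg at hcon
      obtain ⟨hw1, hw2⟩ := hcon
      have hr := hqmax (q ++ [w]) (by simp)
        (by rw [List.nodup_append]
            exact ⟨hqnd, List.nodup_singleton w,
              fun a ha b hb hab => by simp at hb; subst hb; subst hab; exact hw2 ha⟩)
        (by rw [List.isChain_append]
            refine ⟨hqch, List.isChain_singleton w, ?_⟩
            intro x hx y hy
            rw [List.getLast?_eq_getLast hqne] at hx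
            simp at hx hy
            subst hx; subst hy; exact hw)
        (by intro v hv
            rcases List.mem_append.1 hv with h | h
            · exact hqS v h
            · simp at h; subst h
              exact Finset.mem_sdiff.2 ⟨Finset.mem_univ _, hw1⟩)
      have : q.length + 1 ≤ q.length := by simp at hr; omega
      omega
    -- no insertion of the path into the cycle
    have hnoins : ∀ (j : ZMod t0) (k : ℕ), 1 ≤ k → k ≤ s → k ≤ t0 →
        A (f j) u1 → A us (f (j + (k : ℕ))) → False := by
      intro j k hk1 hks hkt hjA hus2
      set P : List V :=
        (List.range (t0 - k + 1)).map (fun m : ℕ => f (j + (k : ZMod t0) + ((m : ℕ) : ZMod t0))) with hP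
      have hPlen : P.length = t0 - k + 1 := by simp [hP]
      have hPne : P ≠ [] := by
        rw [← List.length_pos_iff, hPlen]; omega
      have hcast : ∀ m1 m2 : ℕ, m1 < t0 - k + 1 → m2 < t0 - k + 1 →
          ((m1 : ZMod t0) = (m2 : ZMod t0)) → m1 = m2 := by
        intro m1 m2 hm1 hm2 he
        have h3 : m1 % t0 = m2 % t0 := (ZMod.natCast_eq_natCast_iff m1 m2 t0).1 he
        rwa [Nat.mod_eq_of_lt (by omega), Nat.mod_eq_of_lt (by omega)] at h3
      have hPnd : P.Nodup := by
        apply List.Nodup.map_on ?_ List.nodup_range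
        intro m1 h1 m2 h2 he
        simp only [List.mem_range] at h1 h2
        have h3 := hfinj he
        have h4 : ((m1 : ZMod t0)) = ((m2 : ZMod t0)) := by
          have h5 := congrArg (fun x => x - (j + (k : ZMod t0))) h3
          simpa [add_assoc] using h5
        exact hcast _ _ h1 h2 h4
      have hPget : ∀ (m : ℕ) (hm : m < P.length),
          P[m] = f (j + (k : ZMod t0) + (m : ZMod t0)) := by
        intro m hm
        simp [hP]
      have hPmem : ∀ v ∈ P, v ∈ C := by
        intro v hv
        rw [hP] at hv
        simp only [List.mem_map, List.mem_range] at hv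
        obtain ⟨m, -, rfl⟩ := hv
        exact Finset.mem_image.2 ⟨_, Finset.mem_univ _, rfl⟩
      have hnewne : P ++ q ≠ [] := by simp [hPne]
      have hnewnd : (P ++ q).Nodup := by
        rw [List.nodup_append]
        exact ⟨hPnd, hqnd, fun a ha b hb hab => hqC b hb (hab ▸ hPmem a ha)⟩
      have hPlast : P.getLast hPne = f j := by
        rw [List.getLast_eq_getElem, hPget _ (by omega)]
        have h5 : ((P.length - 1 : ℕ) : ZMod t0) = ((t0 - k : ℕ) : ZMod t0) := by
          rw [hPlen]
          simp
        rw [h5]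
        have h6 : ((t0 - k : ℕ) : ZMod t0) = - ((k : ℕ) : ZMod t0) := by
          rw [Nat.cast_sub hkt, ZMod.natCast_self, zero_sub]
        rw [h6]
        congr 1
        ring
      have hPhead : P.head hPne = f (j + (k : ZMod t0)) := by
        rw [List.head_eq_getElem, hPget 0 (by omega)]
        norm_num
      have hnewch : List.IsChain A (P ++ q) := by
        rw [List.isChain_append]
        refine ⟨?_, hqch, ?_⟩
        · rw [hP]
          apply GH.chain'_map_range
          intro m hm
          have h7 : ((m + 1 : ℕ) : ZMod t0) = ((m : ZMod t0) + 1) := by push_cast; ring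
          rw [h7, ← add_assoc]
          exact hfarc _
        · intro x hx y hy
          rw [List.getLast?_eq_getLast hPne] at hx
          rw [List.head?_eq_head hqne] at hy
          simp at hx hy
          subst hx; subst hy
          rw [hPlast]
          exact hjA
      have hwrap : A ((P ++ q).getLast hnewne) ((P ++ q).head hnewne) := by
        have h8 : (P ++ q).getLast hnewne = us := by
          rw [List.getLast_append]
          simp [hqne, hus]
        have h9 : (P ++ q).head hnewne = f (j + (k : ZMod t0)) := by
          rw [List.head_append]
          simp [hPne, hPhead]
        rw [h8, h9]
        exact hus2
      obtain ⟨g2, hg2a, hg2b⟩ := GH.listToFn A (P ++ q) hnewne hnewnd hnewch hwrap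
      have hle := hmaxT _ g2 hg2a hg2b
      rw [List.length_append, hPlen, ← hs] at hle
      omega
    -- getD helpers
    have hgetD : ∀ (i : ℕ) (h : i < q.length), q[i] = q.getD i u1 :=
      fun i h => (List.getD_eq_getElem q u1 h).symm
    have hqg0 : q.getD 0 u1 = u1 := by
      rw [List.getD_eq_getElem q u1 (by omega), hu1, List.head_eq_getElem]
    have hqglast : q.getD (s - 1) u1 = us := by
      rw [hs, List.getD_eq_getElem q u1 (by omega), hus, List.getLast_eq_getElem]
    -- degenerate case: all out-neighbours of us lie on the path q
    have hdegenB : (∀ i : ZMod t0, ¬ A us (f i)) → False := by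
      intro hB
      set O : Finset ℕ := (Finset.range s).filter (fun i => A us (q.getD i u1)) with hO
      have hOsub : Finset.univ.filter (fun w => A us w) ⊆ O.image (fun i => q.getD i u1) := by
        intro w hw
        rw [Finset.mem_filter] at hw
        have hw2 := hw.2
        rcases hout w hw2 with hC2 | hq2
        · exfalso
          rw [hC] at hC2
          obtain ⟨i, -, rfl⟩ := Finset.mem_image.1 hC2
          exact hB i hw2
        · obtain ⟨m, hm, rfl⟩ := List.mem_iff_getElem.1 hq2
          refine Finset.mem_image.2 ⟨m, ?_, (hgetD m hm).symm⟩
          rw [hO]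
          refine Finset.mem_filter.2 ⟨Finset.mem_range.2 (by omega), ?_⟩
          rw [← hgetD m hm]
          exact hw2
      have hOcard : outDeg A us ≤ O.card := by
        have h1 := Finset.card_le_card hOsub
        have h2 : outDeg A us = (Finset.univ.filter (fun w => A us w)).card := rfl
        have h3 := Finset.card_image_le (s := O) (f := fun i => q.getD i u1)
        omega
      have hdus := (hdeg us).1
      have hOne : O.Nonempty := by
        rw [← Finset.card_pos]
        omega
      set i0 := O.min' hOne with hi0
      have hi0mem := O.min'_mem hOne
      have hi0arc : A us (q.getD i0 u1) := (Finset.mem_filter.1 hi0mem).2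
      have hi0s : i0 < s := by
        exact Finset.mem_range.1 (Finset.mem_filter.1 hi0mem).1
      have hns1 : s - 1 ∉ O := by
        intro hmem
        have h4 := (Finset.mem_filter.1 hmem).2
        rw [hqglast] at h4
        exact hirr us h4
      have hOcard2 : O.card ≤ s - 1 - i0 := by
        have h5 : O ⊆ Finset.Ico i0 (s - 1) := by
          intro i hi
          rw [Finset.mem_Ico]
          refine ⟨O.min'_le i hi, ?_⟩
          have h6 : i < s := by simpa using (Finset.mem_filter.1 hi).1
          have h7 : i ≠ s - 1 := fun h => hns1 (h ▸ hi)
          omega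
        have h8 := Finset.card_le_card h5
        rwa [Nat.card_Ico] at h8
      -- the cycle q.drop i0
      have hlen2 : (q.drop i0).length = s - i0 := by rw [List.length_drop, ← hs]
      have hne2 : q.drop i0 ≠ [] := by rw [← List.length_pos_iff, hlen2]; omega
      have hnd2 : (q.drop i0).Nodup := (List.drop_sublist i0 q).nodup hqnd
      have hch2 : List.IsChain A (q.drop i0) := hqch.drop i0
      have hhead2 : (q.drop i0).head hne2 = q.getD i0 u1 := by
        rw [List.head_eq_getElem, List.getElem_drop, hgetD (i0 + 0) (by omega)]
        norm_num
      have hlast2 : (q.drop i0).getLast hne2 = us := by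
        rw [List.getLast_eq_getElem, List.getElem_drop, hgetD _ (by omega)]
        have h9 : i0 + ((q.drop i0).length - 1) = s - 1 := by rw [hlen2]; omega
        rw [h9, hqglast]
      have hwrap2 : A ((q.drop i0).getLast hne2) ((q.drop i0).head hne2) := by
        rw [hlast2, hhead2]
        exact hi0arc
      obtain ⟨g2, hg2a, hg2b⟩ := GH.listToFn A (q.drop i0) hne2 hnd2 hch2 hwrap2
      have hle := hmaxT _ g2 hg2a hg2b
      rw [hlen2] at hle
      omega
    -- degenerate case: all in-neighbours of u1 lie on the path q
    have hdegenA : (∀ i : ZMod t0, ¬ A (f i) u1) → False := by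
      intro hB
      set I : Finset ℕ := (Finset.range s).filter (fun i => A (q.getD i u1) u1) with hI
      have hIsub : Finset.univ.filter (fun w => A w u1) ⊆ I.image (fun i => q.getD i u1) := by
        intro w hw
        rw [Finset.mem_filter] at hw
        have hw2 := hw.2
        rcases hin w hw2 with hC2 | hq2
        · exfalso
          rw [hC] at hC2
          obtain ⟨i, -, rfl⟩ := Finset.mem_image.1 hC2
          exact hB i hw2
        · obtain ⟨m, hm, rfl⟩ := List.mem_iff_getElem.1 hq2
          refine Finset.mem_image.2 ⟨m, ?_, (hgetD m hm).symm⟩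
          rw [hI]
          refine Finset.mem_filter.2 ⟨Finset.mem_range.2 (by omega), ?_⟩
          rw [← hgetD m hm]
          exact hw2
      have hIcard : inDeg A u1 ≤ I.card := by
        have h1 := Finset.card_le_card hIsub
        have h2 : inDeg A u1 = (Finset.univ.filter (fun w => A w u1)).card := rfl
        have h3 := Finset.card_image_le (s := I) (f := fun i => q.getD i u1)
        omega
      have hdu1 := (hdeg u1).2
      have hIne : I.Nonempty := by
        rw [← Finset.card_pos]
        omega
      set i1 := I.max' hIne with hi1
      have hi1mem := I.max'_mem hIne
      have hi1arc : A (q.getD i1 u1) u1 := (Finset.mem_filter.1 hi1mem).2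
      have hi1s : i1 < s := by
        exact Finset.mem_range.1 (Finset.mem_filter.1 hi1mem).1
      have hn0 : 0 ∉ I := by
        intro hmem
        have h4 := (Finset.mem_filter.1 hmem).2
        rw [hqg0] at h4
        exact hirr u1 h4
      have hIcard2 : I.card ≤ i1 := by
        have h5 : I ⊆ Finset.Icc 1 i1 := by
          intro i hi
          rw [Finset.mem_Icc]
          refine ⟨?_, I.le_max' i hi⟩
          have h7 : i ≠ 0 := fun h => hn0 (h ▸ hi)
          omega
        have h8 := Finset.card_le_card h5
        rw [Nat.card_Icc] at h8
        omega
      -- the cycle q.take (i1+1)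
      have hlen2 : (q.take (i1 + 1)).length = i1 + 1 := by
        rw [List.length_take, ← hs]
        omega
      have hne2 : q.take (i1 + 1) ≠ [] := by rw [← List.length_pos_iff, hlen2]; omega
      have hnd2 : (q.take (i1 + 1)).Nodup := (List.take_sublist (i1 + 1) q).nodup hqnd
      have hch2 : List.IsChain A (q.take (i1 + 1)) := hqch.take (i1 + 1)
      have hhead2 : (q.take (i1 + 1)).head hne2 = u1 := by
        rw [List.head_eq_getElem, List.getElem_take, hgetD 0 (by omega), hqg0]
      have hlast2 : (q.take (i1 + 1)).getLast hne2 = q.getD i1 u1 := by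
        rw [List.getLast_eq_getElem, List.getElem_take, hgetD _ (by omega)]
        rw [hlen2]
        norm_num
      have hwrap2 : A ((q.take (i1 + 1)).getLast hne2) ((q.take (i1 + 1)).head hne2) := by
        rw [hlast2, hhead2]
        exact hi1arc
      obtain ⟨g2, hg2a, hg2b⟩ := GH.listToFn A (q.take (i1 + 1)) hne2 hnd2 hch2 hwrap2
      have hle := hmaxT _ g2 hg2a hg2b
      rw [hlen2] at hle
      omega
    -- in/out neighbour positions on the cycle
    set Apos : Finset (ZMod t0) := Finset.univ.filter (fun j => A (f j) u1) with hApos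
    set Bpos : Finset (ZMod t0) := Finset.univ.filter (fun j => A us (f j)) with hBpos
    have hAne : Apos.Nonempty := by
      by_contra hcon
      rw [Finset.not_nonempty_iff_eq_empty, Finset.filter_eq_empty_iff] at hcon
      exact hdegenA (fun i => hcon (Finset.mem_univ i))
    have hBne : Bpos.Nonempty := by
      by_contra hcon
      rw [Finset.not_nonempty_iff_eq_empty, Finset.filter_eq_empty_iff] at hcon
      exact hdegenB (fun i => hcon (Finset.mem_univ i))
    have hAcard1 : 1 ≤ Apos.card := Finset.card_pos.2 hAne
    have hBcard1 : 1 ≤ Bpos.card := Finset.card_pos.2 hBne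
    have hAdeg : n ≤ 2 * (Apos.card + (s - 1)) := by
      have hsub : Finset.univ.filter (fun w => A w u1) ⊆
          Apos.image f ∪ (q.toFinset.erase u1) := by
        intro w hw
        rw [Finset.mem_filter] at hw
        rcases hin w hw.2 with hC2 | hq2
        · rw [Finset.mem_union]
          left
          rw [hC] at hC2
          obtain ⟨i, -, rfl⟩ := Finset.mem_image.1 hC2
          exact Finset.mem_image.2 ⟨i, Finset.mem_filter.2 ⟨Finset.mem_univ _, hw.2⟩, rfl⟩
        · rw [Finset.mem_union]
          right
          refine Finset.mem_erase.2 ⟨?_, List.mem_toFinset.2 hq2⟩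
          intro hcon
          subst hcon
          exact hirr _ hw.2
      have h1 := Finset.card_le_card hsub
      have h2 : inDeg A u1 = (Finset.univ.filter (fun w => A w u1)).card := rfl
      have h3 := Finset.card_union_le (Apos.image f) (q.toFinset.erase u1)
      have h4 : (Apos.image f).card ≤ Apos.card := Finset.card_image_le
      have h5 : (q.toFinset.erase u1).card = s - 1 := by
        rw [Finset.card_erase_of_mem (List.mem_toFinset.2 (List.head_mem hqne)),
          List.toFinset_card_of_nodup hqnd, ← hs]
      have hd := (hdeg u1).2
      omega
    have hBdeg : n ≤ 2 * (Bpos.card + (s - 1)) := by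
      have hsub : Finset.univ.filter (fun w => A us w) ⊆
          Bpos.image f ∪ (q.toFinset.erase us) := by
        intro w hw
        rw [Finset.mem_filter] at hw
        rcases hout w hw.2 with hC2 | hq2
        · rw [Finset.mem_union]
          left
          rw [hC] at hC2
          obtain ⟨i, -, rfl⟩ := Finset.mem_image.1 hC2
          exact Finset.mem_image.2 ⟨i, Finset.mem_filter.2 ⟨Finset.mem_univ _, hw.2⟩, rfl⟩
        · rw [Finset.mem_union]
          right
          refine Finset.mem_erase.2 ⟨?_, List.mem_toFinset.2 hq2⟩
          intro hcon
          subst hcon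
          exact hirr _ hw.2
      have h1 := Finset.card_le_card hsub
      have h2 : outDeg A us = (Finset.univ.filter (fun w => A us w)).card := rfl
      have h3 := Finset.card_union_le (Bpos.image f) (q.toFinset.erase us)
      have h4 : (Bpos.image f).card ≤ Bpos.card := Finset.card_image_le
      have h5 : (q.toFinset.erase us).card = s - 1 := by
        rw [Finset.card_erase_of_mem (List.mem_toFinset.2 (List.getLast_mem hqne)),
          List.toFinset_card_of_nodup hqnd, ← hs]
      have hd := (hdeg us).1
      omega
    by_cases hcase : s ≤ t0
    · -- main counting case
      set blocked : Finset (ZMod t0) :=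
        Apos.biUnion (fun j => (Finset.Icc 1 s).image (fun k : ℕ => j + ((k : ℕ) : ZMod t0)))
        with hblk
      have hblkB : ∀ i ∈ blocked, i ∉ Bpos := by
        intro i hi hiB
        rw [hblk, Finset.mem_biUnion] at hi
        obtain ⟨j, hj, hi2⟩ := hi
        obtain ⟨k, hk, rfl⟩ := Finset.mem_image.1 hi2
        rw [Finset.mem_Icc] at hk
        have hjA : A (f j) u1 := (Finset.mem_filter.1 hj).2
        have hBk : A us (f (j + ((k : ℕ) : ZMod t0))) := (Finset.mem_filter.1 hiB).2
        exact hnoins j k hk.1 hk.2 (le_trans hk.2 hcase) hjA hBk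
      obtain ⟨z, hzB⟩ := hBne
      have hzblk : z ∉ blocked := fun h => hblkB z h hzB
      obtain ⟨j0, hj0A, hj0max⟩ := Finset.exists_max_image Apos (fun j => (j - z).val) hAne
      have hd0 : (j0 - z).val + s ≤ t0 - 1 := by
        by_contra hcon
        push_neg at hcon
        have hdlt : (j0 - z).val < t0 := ZMod.val_lt _
        apply hzblk
        rw [hblk, Finset.mem_biUnion]
        refine ⟨j0, hj0A, Finset.mem_image.2 ⟨t0 - (j0 - z).val,
          Finset.mem_Icc.2 ⟨by omega, by omega⟩, ?_⟩⟩
        have h5 : ((t0 - (j0 - z).val : ℕ) : ZMod t0) = - (((j0 - z).val : ℕ) : ZMod t0) := by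
          rw [Nat.cast_sub (by omega), ZMod.natCast_self, zero_sub]
        rw [h5, ZMod.natCast_rightInverse (j0 - z)]
        ring
      have hslt : s ≤ t0 - 1 := by omega
      have hkey : ∀ m : ℕ, 1 ≤ m → m ≤ s - 1 → j0 + ((m : ℕ) : ZMod t0) ∉ Apos := by
        intro m hm1 hm2 hmem
        have hle := hj0max _ hmem
        have hval : ((j0 + ((m : ℕ) : ZMod t0)) - z).val = (j0 - z).val + m := by
          have h6 : (j0 + ((m : ℕ) : ZMod t0)) - z = (j0 - z) + ((m : ℕ) : ZMod t0) := by ring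
          rw [h6, ZMod.val_add_of_lt, ZMod.val_cast_of_lt (by omega)]
          rw [ZMod.val_cast_of_lt (by omega)]
          omega
        simp only [hval] at hle
        omega
      have hW1sub : Apos.image (fun j => j + (1 : ZMod t0)) ⊆ blocked := by
        intro x hx
        obtain ⟨j, hj, rfl⟩ := Finset.mem_image.1 hx
        rw [hblk, Finset.mem_biUnion]
        refine ⟨j, hj, Finset.mem_image.2 ⟨1, Finset.mem_Icc.2 ⟨le_refl 1, hs1⟩, ?_⟩⟩
        norm_num
      have hW2sub : (Finset.Icc 2 s).image (fun k : ℕ => j0 + ((k : ℕ) : ZMod t0)) ⊆ blocked := by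
        intro x hx
        obtain ⟨k, hk, rfl⟩ := Finset.mem_image.1 hx
        rw [Finset.mem_Icc] at hk
        rw [hblk, Finset.mem_biUnion]
        exact ⟨j0, hj0A, Finset.mem_image.2 ⟨k, Finset.mem_Icc.2 ⟨by omega, hk.2⟩, rfl⟩⟩
      have hW1card : (Apos.image (fun j => j + (1 : ZMod t0))).card = Apos.card :=
        Finset.card_image_of_injective _ (add_left_injective 1)
      have hW2card : ((Finset.Icc 2 s).image (fun k : ℕ => j0 + ((k : ℕ) : ZMod t0))).card
          = s - 1 := by
        rw [Finset.card_image_of_injOn, Nat.card_Icc]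
        · omega
        · intro k1 h1 k2 h2 he
          rw [Finset.coe_Icc, Set.mem_Icc] at h1 h2
          have h9 : ((k1 : ℕ) : ZMod t0) = ((k2 : ℕ) : ZMod t0) := by
            have h10 := congrArg (fun x => x - j0) he
            simpa using h10
          have h11 : k1 % t0 = k2 % t0 := (ZMod.natCast_eq_natCast_iff _ _ _).1 h9
          rwa [Nat.mod_eq_of_lt (by omega), Nat.mod_eq_of_lt (by omega)] at h11
      have hWdisj : Disjoint (Apos.image (fun j => j + (1 : ZMod t0)))
          ((Finset.Icc 2 s).image (fun k : ℕ => j0 + ((k : ℕ) : ZMod t0))) := by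
        rw [Finset.disjoint_left]
        intro x hx1 hx2
        obtain ⟨a, ha, hax⟩ := Finset.mem_image.1 hx1
        obtain ⟨k, hk, hkx⟩ := Finset.mem_image.1 hx2
        rw [Finset.mem_Icc] at hk
        have hak : a = j0 + ((k - 1 : ℕ) : ZMod t0) := by
          have h6 : ((k - 1 : ℕ) : ZMod t0) = ((k : ℕ) : ZMod t0) - 1 := by
            rw [Nat.cast_sub (by omega)]
            norm_num
          rw [h6]
          have h7 : a + 1 = j0 + ((k : ℕ) : ZMod t0) := hax.trans hkx.symm
          linear_combination h7
        exact hkey (k - 1) (by omega) (by omega) (hak ▸ ha)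
      have hblkcard : Apos.card + (s - 1) ≤ blocked.card := by
        have h7 : (Apos.image (fun j => j + (1 : ZMod t0)))
            ∪ ((Finset.Icc 2 s).image (fun k : ℕ => j0 + ((k : ℕ) : ZMod t0))) ⊆ blocked :=
          Finset.union_subset hW1sub hW2sub
        have h8 := Finset.card_le_card h7
        rwa [Finset.card_union_of_disjoint hWdisj, hW1card, hW2card] at h8
      have htot : blocked.card + Bpos.card ≤ t0 := by
        have h9 := Finset.card_le_univ (blocked ∪ Bpos)
        rw [Finset.card_union_of_disjoint (Finset.disjoint_left.2 hblkB)] at h9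
        have h10 : Fintype.card (ZMod t0) = t0 := ZMod.card t0
        omega
      omega
    · -- the path is longer than the cycle : all out-neighbours of us avoid the cycle
      push_neg at hcase
      obtain ⟨j, hj⟩ := hAne
      have hjA : A (f j) u1 := (Finset.mem_filter.1 hj).2
      apply hdegenB
      intro i hi
      by_cases hij : i = j
      · apply hnoins j t0 (by omega) (by omega) le_rfl hjA
        rw [ZMod.natCast_self, add_zero, ← hij]
        exact hi
      · have hk0 : (i - j).val ≠ 0 := by
          intro h0
          apply hij
          have h1 : i - j = 0 := by
            have := ZMod.val_injective t0 (a₁ := i - j) (a₂ := 0)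
            apply this
            simpa using h0
          have h2 := congrArg (fun x => x + j) h1
          simpa using h2
        have hklt : (i - j).val < t0 := ZMod.val_lt _
        apply hnoins j ((i - j).val) (by omega) (by omega) (by omega) hjA
        have h3 : j + (((i - j).val : ℕ) : ZMod t0) = i := by
          rw [ZMod.natCast_rightInverse (i - j)]
          ring
        rw [h3]
        exact hi
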